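/- arXiv:1801.05756 — 4 statements merged into one kernel-verified Lean document; each statement's English description precedes it below -/
import Mathlib

section
/- Let W ≥ 0 and h be independent real random variables on a probability space, where h has the Gamma(N,1) density x^{N−1} e^{−x}/(N−1)! on [0,∞) for a positive integer N, and let L(t) = E[e^{−tW}] be the Laplace transform of W. Then for every real c > 0, P(h > c·W) = ∑_{n=0}^{N−1} ((−c)^n / n!) · L^{(n)}(c), where L^{(n)} denotes the n-th iterated derivative of L. -/
open Real MeasureTheory ProbabilityTheory Filter Set

private lemma aux_pow_exp_le (n : ℕ) {a x : ℝ} (ha : 0 < a) (hx : 0 ≤ x) :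
    x ^ n * Real.exp (-(a * x)) ≤ n.factorial / a ^ n := by
  have h1 : (a * x) ^ n / n.factorial ≤ Real.exp (a * x) := by
    calc (a * x) ^ n / n.factorial
        ≤ ∑ i ∈ Finset.range (n + 1), (a * x) ^ i / i.factorial :=
          Finset.single_le_sum (f := fun i => (a * x) ^ i / (i.factorial : ℝ))
            (fun i _ => by positivity) (Finset.self_mem_range_succ n)
      _ ≤ Real.exp (a * x) := Real.sum_le_exp_of_nonneg (by positivity) _
  have h2 : (a * x) ^ n ≤ Real.exp (a * x) * n.factorial :=
    (div_le_iff₀ (by positivity)).1 h1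
  have e1 : Real.exp (-(a * x)) * Real.exp (a * x) = 1 := by
    rw [← Real.exp_add]; simp
  rw [le_div_iff₀ (pow_pos ha n)]
  have h4 : x ^ n * Real.exp (-(a * x)) * a ^ n = (a * x) ^ n * Real.exp (-(a * x)) := by
    rw [mul_pow]; ring
  rw [h4]
  calc (a * x) ^ n * Real.exp (-(a * x))
      ≤ Real.exp (a * x) * n.factorial * Real.exp (-(a * x)) :=
        mul_le_mul_of_nonneg_right h2 (Real.exp_pos _).le
    _ = n.factorial := by
        rw [mul_comm (Real.exp (a*x)) (n.factorial : ℝ), mul_assoc,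
          mul_comm (Real.exp (a*x)), e1, mul_one]

private lemma hasDerivAt_G (N : ℕ) (hN : 0 < N) (x : ℝ) :
    HasDerivAt (fun y => -(Real.exp (-y) * ∑ n ∈ Finset.range N, y ^ n / n.factorial))
      (x ^ (N - 1) * Real.exp (-x) / (N - 1).factorial) x := by
  obtain ⟨M, rfl⟩ : ∃ M, N = M + 1 := ⟨N - 1, (Nat.succ_pred_eq_of_pos hN).symm⟩
  simp only [Nat.add_sub_cancel]
  have hsum : HasDerivAt (fun y : ℝ => ∑ n ∈ Finset.range (M + 1), y ^ n / n.factorial)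
      (∑ n ∈ Finset.range M, x ^ n / n.factorial) x := by
    have h : HasDerivAt (fun y : ℝ => ∑ n ∈ Finset.range (M + 1), y ^ n / n.factorial)
        (∑ n ∈ Finset.range (M + 1), (n : ℝ) * x ^ (n - 1) / n.factorial) x := by
      apply HasDerivAt.fun_sum
      intro n _
      simpa [div_eq_mul_inv] using (hasDerivAt_pow n x).div_const (n.factorial : ℝ)
    convert h using 1
    rw [Finset.sum_range_succ' (fun n => (n : ℝ) * x ^ (n - 1) / n.factorial) M]
    simp only [Nat.cast_zero, Nat.factorial_zero, Nat.cast_one, pow_zero, zero_mul, zero_div,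
      add_zero]
    apply Finset.sum_congr rfl
    intro i _
    have h2 : ((i + 1).factorial : ℝ) = (i + 1) * i.factorial := by
      rw [Nat.factorial_succ]; push_cast; ring
    rw [h2]
    have h1 : ((i : ℝ) + 1) ≠ 0 := by positivity
    field_simp
    push_cast [Nat.add_sub_cancel]
    ring
  have hexp : HasDerivAt (fun y : ℝ => Real.exp (-y)) (-Real.exp (-x)) x := by
    simpa using (hasDerivAt_neg x).exp
  have := (hexp.mul hsum).neg
  refine HasDerivAt.congr_deriv this ?_
  rw [Finset.sum_range_succ]
  ring

private lemma tendsto_G (N : ℕ) :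
    Filter.Tendsto (fun y => -(Real.exp (-y) * ∑ n ∈ Finset.range N, y ^ n / n.factorial))
      Filter.atTop (nhds 0) := by
  have h0 : Tendsto (fun y : ℝ => Real.exp (-y) * ∑ n ∈ Finset.range N, y ^ n / n.factorial)
      atTop (nhds 0) := by
    have h : ∀ y : ℝ, Real.exp (-y) * ∑ n ∈ Finset.range N, y ^ n / n.factorial
        = ∑ n ∈ Finset.range N, (y ^ n * Real.exp (-y)) / n.factorial := by
      intro y; rw [Finset.mul_sum]; apply Finset.sum_congr rfl; intro i _; ring
    simp only [h]
    have h2 : Tendsto (fun y : ℝ => ∑ n ∈ Finset.range N, (y ^ n * Real.exp (-y)) / n.factorial)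
        atTop (nhds (∑ n ∈ Finset.range N, 0)) := by
      apply tendsto_finset_sum
      intro i _
      simpa using (Real.tendsto_pow_mul_exp_neg_atTop_nhds_zero i).div_const (i.factorial : ℝ)
    simpa using h2
  simpa using h0.neg

private lemma gamma_tail (N : ℕ) (hN : 0 < N) {a : ℝ} (ha : 0 ≤ a) :
    (∫ x in Set.Ioi a, x ^ (N - 1) * Real.exp (-x) / (N - 1).factorial)
      = Real.exp (-a) * ∑ n ∈ Finset.range N, a ^ n / n.factorial := by
  have key := integral_Ioi_of_hasDerivAt_of_nonneg'
    (g := fun y => -(Real.exp (-y) * ∑ n ∈ Finset.range N, y ^ n / n.factorial))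
    (g' := fun x => x ^ (N - 1) * Real.exp (-x) / (N - 1).factorial)
    (fun x _ => hasDerivAt_G N hN x)
    (fun x hx => by
      have hx0 : (0:ℝ) < x := lt_of_le_of_lt ha hx
      positivity)
    (tendsto_G N)
  rw [key]
  simp

private lemma gamma_tail_integrable (N : ℕ) (hN : 0 < N) {a : ℝ} (ha : 0 ≤ a) :
    IntegrableOn (fun x => x ^ (N - 1) * Real.exp (-x) / (N - 1).factorial) (Set.Ioi a) :=
  integrableOn_Ioi_deriv_of_nonneg'
    (fun x _ => hasDerivAt_G N hN x)
    (fun x hx => by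
      have hx0 : (0:ℝ) < x := lt_of_le_of_lt ha hx
      positivity)
    (tendsto_G N)

private lemma integrable_pow_exp {Ω : Type*} [MeasurableSpace Ω] {P : Measure Ω}
    [IsProbabilityMeasure P] {W : Ω → ℝ} (hW : Measurable W) (hWnn : ∀ ω, 0 ≤ W ω)
    (n : ℕ) {t : ℝ} (ht : 0 < t) :
    Integrable (fun ω => (-W ω) ^ n * Real.exp (-(t * W ω))) P := by
  apply Integrable.mono' (integrable_const ((n.factorial : ℝ) / t ^ n))
  · exact ((hW.neg.pow_const n).mul ((hW.const_mul t).neg.exp)).aestronglyMeasurable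
  · refine Filter.Eventually.of_forall fun ω => ?_
    have h1 : ‖(-W ω) ^ n * Real.exp (-(t * W ω))‖
        = W ω ^ n * Real.exp (-(t * W ω)) := by
      rw [norm_mul, norm_pow, norm_neg, Real.norm_eq_abs, Real.norm_eq_abs,
        abs_of_nonneg (hWnn ω), abs_of_nonneg (Real.exp_pos _).le]
    rw [h1]
    exact aux_pow_exp_le n ht (hWnn ω)

private lemma hasDerivAt_F {Ω : Type*} [MeasurableSpace Ω] {P : Measure Ω}
    [IsProbabilityMeasure P] {W : Ω → ℝ} (hW : Measurable W) (hWnn : ∀ ω, 0 ≤ W ω)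
    (n : ℕ) {t : ℝ} (ht : 0 < t) :
    HasDerivAt (fun s => ∫ ω, (-W ω) ^ n * Real.exp (-(s * W ω)) ∂P)
      (∫ ω, (-W ω) ^ (n + 1) * Real.exp (-(t * W ω)) ∂P) t := by
  have ht2 : 0 < t / 2 := by linarith
  have main := hasDerivAt_integral_of_dominated_loc_of_deriv_le
    (F := fun s ω => (-W ω) ^ n * Real.exp (-(s * W ω)))
    (F' := fun s ω => (-W ω) ^ (n + 1) * Real.exp (-(s * W ω)))
    (x₀ := t) (bound := fun _ => ((n+1).factorial : ℝ) / (t/2) ^ (n+1)) (μ := P)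
    (Metric.ball_mem_nhds t ht2)
    (Filter.Eventually.of_forall fun s =>
      ((hW.neg.pow_const n).mul ((hW.const_mul s).neg.exp)).aestronglyMeasurable)
    (integrable_pow_exp hW hWnn n ht)
    (((hW.neg.pow_const (n+1)).mul ((hW.const_mul t).neg.exp)).aestronglyMeasurable)
    (Filter.Eventually.of_forall fun ω => fun s hs => ?_)
    (integrable_const _)
    (Filter.Eventually.of_forall fun ω => fun s _ => ?_)
  · exact main.2
  · -- bound
    have hst : t / 2 ≤ s := by
      have := abs_lt.1 (mem_ball_iff_norm.1 hs)
      linarith [this.1]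
    have h1 : ‖(-W ω) ^ (n+1) * Real.exp (-(s * W ω))‖
        = W ω ^ (n+1) * Real.exp (-(s * W ω)) := by
      rw [norm_mul, norm_pow, norm_neg, Real.norm_eq_abs, Real.norm_eq_abs,
        abs_of_nonneg (hWnn ω), abs_of_nonneg (Real.exp_pos _).le]
    rw [h1]
    calc W ω ^ (n+1) * Real.exp (-(s * W ω))
        ≤ W ω ^ (n+1) * Real.exp (-(t/2 * W ω)) := by
          apply mul_le_mul_of_nonneg_left _ (pow_nonneg (hWnn ω) _)
          apply Real.exp_le_exp.2
          have := mul_le_mul_of_nonneg_right hst (hWnn ω)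
          linarith
      _ ≤ ((n+1).factorial : ℝ) / (t/2) ^ (n+1) := aux_pow_exp_le (n+1) ht2 (hWnn ω)
  · -- differentiability
    have hd : HasDerivAt (fun u : ℝ => -(u * W ω)) (-W ω) s := by
      exact (hasDerivAt_mul_const (W ω) (x := s)).neg
    have h5 := (hd.exp.const_mul ((-W ω) ^ n))
    refine h5.congr_deriv ?_
    show _ = (-W ω) ^ (n + 1) * rexp (-(s * W ω))
    rw [pow_succ]
    ring

private lemma iteratedDeriv_L {Ω : Type*} [MeasurableSpace Ω] {P : Measure Ω}
    [IsProbabilityMeasure P] {W : Ω → ℝ} (hW : Measurable W) (hWnn : ∀ ω, 0 ≤ W ω)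
    (L : ℝ → ℝ) (hL : ∀ t, L t = ∫ ω, Real.exp (-(t * W ω)) ∂P)
    (n : ℕ) {t : ℝ} (ht : 0 < t) :
    iteratedDeriv n L t = ∫ ω, (-W ω) ^ n * Real.exp (-(t * W ω)) ∂P := by
  induction n generalizing t with
  | zero => simp [iteratedDeriv_zero, hL t]
  | succ n ih =>
    rw [iteratedDeriv_succ]
    have heq : (iteratedDeriv n L) =ᶠ[nhds t]
        (fun s => ∫ ω, (-W ω) ^ n * Real.exp (-(s * W ω)) ∂P) := by
      filter_upwards [eventually_gt_nhds ht] with s hs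
      exact ih hs
    rw [heq.deriv_eq]
    exact (hasDerivAt_F hW hWnn n ht).deriv

/-- The abstract multi-antenna conditional coverage probability formula
(eq. (A.4) of the paper): if `h` is Gamma(N,1) distributed and independent of
the nonnegative random variable `W`, and `L(t) = E[e^{-tW}]` is the Laplace
transform of `W`, then `P(h > cW) = ∑_{n=0}^{N-1} ((-c)^n / n!) L^{(n)}(c)`
for every `c > 0`. -/
theorem gamma_exceeds_scaled_laplace (Ω : Type*) [MeasurableSpace Ω] (P : Measure Ω)
    [IsProbabilityMeasure P] (W h : Ω → ℝ) (hW : Measurable W) (hh : Measurable h)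
    (hWnn : ∀ ω, 0 ≤ W ω) (hindep : IndepFun W h P)
    (N : ℕ) (hN : 0 < N)
    (hdens : P.map h = volume.withDensity (fun x =>
      ENNReal.ofReal
        (if 0 ≤ x then x ^ (N - 1) * Real.exp (-x) / (Nat.factorial (N - 1) : ℝ) else 0)))
    (L : ℝ → ℝ) (hL : ∀ t, L t = ∫ ω, Real.exp (-(t * W ω)) ∂P)
    (c : ℝ) (hc : 0 < c) :
    (P {ω | c * W ω < h ω}).toReal =
      ∑ n ∈ Finset.range N, ((-c) ^ n / (Nat.factorial n : ℝ)) * iteratedDeriv n L c := by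
  have hmW : AEMeasurable W P := hW.aemeasurable
  have hmh : AEMeasurable h P := hh.aemeasurable
  haveI : IsProbabilityMeasure (P.map W) := Measure.isProbabilityMeasure_map hmW
  haveI : IsProbabilityMeasure (P.map h) := Measure.isProbabilityMeasure_map hmh
  set g : ℝ → ℝ := fun w => Real.exp (-(c * w)) * ∑ n ∈ Finset.range N, (c * w) ^ n / n.factorial
    with hgdef
  have hset : MeasurableSet {p : ℝ × ℝ | c * p.1 < p.2} :=
    measurableSet_lt (measurable_fst.const_mul c) measurable_snd
  have h1 : P {ω | c * W ω < h ω}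
      = ((P.map W).prod (P.map h)) {p : ℝ × ℝ | c * p.1 < p.2} := by
    rw [← (indepFun_iff_map_prod_eq_prod_map_map hmW hmh).1 hindep,
      Measure.map_apply (hW.prodMk hh) hset]
    rfl
  have h2 : ((P.map W).prod (P.map h)) {p : ℝ × ℝ | c * p.1 < p.2}
      = ∫⁻ w, (P.map h) (Set.Ioi (c * w)) ∂(P.map W) := by
    rw [Measure.prod_apply hset]
    rfl
  have h3 : ∀ w : ℝ, 0 ≤ w → (P.map h) (Set.Ioi (c * w)) = ENNReal.ofReal (g w) := by
    intro w hw
    have hcw : (0:ℝ) ≤ c * w := mul_nonneg hc.le hw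
    rw [hdens, withDensity_apply _ measurableSet_Ioi]
    have hcong : ∀ᵐ x ∂volume, x ∈ Set.Ioi (c * w) →
        ENNReal.ofReal (if 0 ≤ x then x ^ (N - 1) * Real.exp (-x) / ((N - 1).factorial : ℝ)
          else 0)
        = ENNReal.ofReal (x ^ (N - 1) * Real.exp (-x) / ((N - 1).factorial : ℝ)) := by
      refine Filter.Eventually.of_forall fun x hx => ?_
      rw [if_pos (le_of_lt (lt_of_le_of_lt hcw hx))]
    rw [setLIntegral_congr_fun measurableSet_Ioi (fun x (hx : x ∈ Set.Ioi (c * w)) => by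
        rw [if_pos (le_of_lt (lt_of_le_of_lt hcw hx))]),
      ← ofReal_integral_eq_lintegral_ofReal (gamma_tail_integrable N hN hcw)
        ((ae_restrict_iff' measurableSet_Ioi).2 (Filter.Eventually.of_forall fun x hx => by
          have hx0 : (0:ℝ) < x := lt_of_le_of_lt hcw hx
          positivity)),
      gamma_tail N hN hcw]
  have hae : ∀ᵐ w ∂(P.map W), w ∈ Set.Ici (0:ℝ) :=
    (ae_map_iff hmW measurableSet_Ici).2 (ae_of_all _ fun ω => hWnn ω)
  have h4 : ∫⁻ w, (P.map h) (Set.Ioi (c * w)) ∂(P.map W)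
      = ∫⁻ w, ENNReal.ofReal (g w) ∂(P.map W) := by
    refine lintegral_congr_ae ?_
    filter_upwards [hae] with w hw
    exact h3 w hw
  have hgcont : Continuous g := by
    apply Continuous.mul
    · exact (continuous_const.mul continuous_id).neg.rexp
    · exact continuous_finset_sum _ fun n _ =>
        ((continuous_const.mul continuous_id).pow n).div_const _
  have hgnn : ∀ w : ℝ, 0 ≤ w → 0 ≤ g w := by
    intro w hw
    have hcw : (0:ℝ) ≤ c * w := mul_nonneg hc.le hw
    apply mul_nonneg (Real.exp_pos _).le
    exact Finset.sum_nonneg fun n _ => by positivity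
  have hgbd : ∀ w : ℝ, 0 ≤ w → g w ≤ N := by
    intro w hw
    have hcw : (0:ℝ) ≤ c * w := mul_nonneg hc.le hw
    simp only [hgdef, Finset.mul_sum]
    calc ∑ n ∈ Finset.range N, Real.exp (-(c * w)) * ((c * w) ^ n / n.factorial)
        ≤ ∑ n ∈ Finset.range N, (1:ℝ) := by
          apply Finset.sum_le_sum
          intro n _
          have hb := aux_pow_exp_le n (a := 1) (x := c * w) one_pos hcw
          simp only [one_mul, one_pow, div_one] at hb
          have he : Real.exp (-(c * w)) * ((c * w) ^ n / n.factorial)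
              = ((c * w) ^ n * Real.exp (-(c * w))) / n.factorial := by ring
          rw [he, div_le_one (by positivity)]
          exact hb
      _ = N := by simp
  have hgint : Integrable g (P.map W) := by
    apply Integrable.mono' (integrable_const (N : ℝ)) hgcont.aestronglyMeasurable
    filter_upwards [hae] with w hw
    rw [Real.norm_eq_abs, abs_of_nonneg (hgnn w hw)]
    exact hgbd w hw
  have hgnn_ae : 0 ≤ᵐ[P.map W] g := by
    filter_upwards [hae] with w hw
    exact hgnn w hw
  have h5 : ∫⁻ w, ENNReal.ofReal (g w) ∂(P.map W) = ENNReal.ofReal (∫ w, g w ∂(P.map W)) :=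
    (ofReal_integral_eq_lintegral_ofReal hgint hgnn_ae).symm
  have h6 : ∫ w, g w ∂(P.map W) = ∫ ω, g (W ω) ∂P :=
    integral_map hmW hgcont.aestronglyMeasurable
  have hterm_int : ∀ n : ℕ, Integrable
      (fun ω => Real.exp (-(c * W ω)) * ((c * W ω) ^ n / n.factorial)) P := by
    intro n
    have heq : (fun ω => Real.exp (-(c * W ω)) * ((c * W ω) ^ n / n.factorial))
        = fun ω => ((-c) ^ n / n.factorial) * ((-W ω) ^ n * Real.exp (-(c * W ω))) := by
      funext ω
      have hmn : (-c) ^ n * (-W ω) ^ n = (c * W ω) ^ n := by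
        rw [← mul_pow]; ring_nf
      field_simp
      rw [← hmn]
    rw [heq]
    exact (integrable_pow_exp hW hWnn n hc).const_mul _
  have h7 : ∫ ω, g (W ω) ∂P
      = ∑ n ∈ Finset.range N, ∫ ω, Real.exp (-(c * W ω)) * ((c * W ω) ^ n / n.factorial) ∂P := by
    have hexp : ∀ ω, g (W ω)
        = ∑ n ∈ Finset.range N, Real.exp (-(c * W ω)) * ((c * W ω) ^ n / n.factorial) := by
      intro ω
      simp only [hgdef, Finset.mul_sum]
    simp_rw [hexp]
    exact integral_finset_sum _ fun n _ => hterm_int n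
  have h9 : ∀ n : ℕ, ((-c) ^ n / (n.factorial : ℝ)) * iteratedDeriv n L c
      = ∫ ω, Real.exp (-(c * W ω)) * ((c * W ω) ^ n / n.factorial) ∂P := by
    intro n
    rw [iteratedDeriv_L hW hWnn L hL n hc, ← integral_const_mul]
    apply integral_congr_ae
    refine ae_of_all _ fun ω => ?_
    have hmn : (-c) ^ n * (-W ω) ^ n = (c * W ω) ^ n := by
      rw [← mul_pow]; ring_nf
    calc ((-c) ^ n / n.factorial) * ((-W ω) ^ n * Real.exp (-(c * W ω)))
        = ((-c) ^ n * (-W ω) ^ n) * Real.exp (-(c * W ω)) / n.factorial := by ring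
      _ = Real.exp (-(c * W ω)) * ((c * W ω) ^ n / n.factorial) := by rw [hmn]; ring
  have hintnn : 0 ≤ ∫ w, g w ∂(P.map W) := integral_nonneg_of_ae hgnn_ae
  rw [h1, h2, h4, h5, ENNReal.toReal_ofReal hintnn, h6, h7]
  exact (Finset.sum_congr rfl fun n _ => h9 n).symm
end

section
/- Fix real numbers γ > 0 with γ ≠ 1, J > 1, ℓ ≥ 1 and ϖ ∈ (0,1). Define f₁ : (0,1] → ℝ by f₁(ε) = [ (ℓ−1) ε^{1−γ} + (ε + (1−ε)/ϖ)^{1−γ} − ℓ ] / (J^{1−γ} − 1). Then f₁ is concave on (0,1]. -/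
open Real Set

lemma convexOn_rpow_neg {p : ℝ} (hp : p < 0) :
    ConvexOn ℝ (Set.Ioi (0 : ℝ)) (fun x : ℝ => x ^ p) := by
  have hne : ∀ x ∈ Set.Ioi (0 : ℝ), x ≠ 0 := fun x hx => ne_of_gt hx
  have hEq : Set.EqOn (deriv fun x : ℝ => x ^ p) (fun x => p * x ^ (p - 1)) (Set.Ioi 0) := by
    intro x hx
    exact Real.deriv_rpow_const x p
  apply convexOn_of_deriv2_nonneg' (convex_Ioi 0)
  · intro x hx
    exact (Real.hasDerivAt_rpow_const (Or.inl (hne x hx))).differentiableAt.differentiableWithinAt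
  · apply DifferentiableOn.congr _ hEq
    intro x hx
    exact (((Real.hasDerivAt_rpow_const (p := p - 1)
      (Or.inl (hne x hx))).differentiableAt).const_mul p).differentiableWithinAt
  · intro x hx
    have hx' : (0:ℝ) < x := hx
    have hmem : Set.Ioi (0:ℝ) ∈ nhds x := (isOpen_Ioi).mem_nhds hx
    have hfeq : deriv (fun x : ℝ => x ^ p) =ᶠ[nhds x] (fun x => p * x ^ (p - 1)) :=
      Filter.eventuallyEq_of_mem hmem hEq
    have h2 : deriv^[2] (fun x : ℝ => x ^ p) x = deriv (deriv (fun x : ℝ => x ^ p)) x := rfl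
    rw [h2, hfeq.deriv_eq]
    have : HasDerivAt (fun x : ℝ => p * x ^ (p - 1)) (p * ((p-1) * x ^ (p - 1 - 1))) x :=
      (Real.hasDerivAt_rpow_const (p := p - 1) (Or.inl (ne_of_gt hx'))).const_mul p
    rw [this.deriv]
    have hxp : (0:ℝ) ≤ x ^ (p - 1 - 1) := Real.rpow_nonneg hx'.le _
    have hpp : 0 < (-p) * (-(p - 1)) := mul_pos (by linarith) (by linarith)
    nlinarith

/-- Concavity of the two-stair caching objective (Appendix C of the paper):
for `γ > 0`, `γ ≠ 1`, `J > 1`, `ℓ ≥ 1` and `ϖ ∈ (0,1)`, the function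
`f₁(ε) = [(ℓ-1) ε^{1-γ} + (ε + (1-ε)/ϖ)^{1-γ} - ℓ]/(J^{1-γ} - 1)` is concave
on `(0,1]`. -/
theorem two_stair_objective_concave (γ J ℓ ϖ : ℝ) (hγ : 0 < γ) (hγ1 : γ ≠ 1)
    (hJ : 1 < J) (hℓ : 1 ≤ ℓ) (hϖ : ϖ ∈ Set.Ioo (0 : ℝ) 1) :
    ConcaveOn ℝ (Set.Ioc (0 : ℝ) 1)
      (fun ε : ℝ =>
        ((ℓ - 1) * ε ^ (1 - γ) + (ε + (1 - ε) / ϖ) ^ (1 - γ) - ℓ) /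
          (J ^ (1 - γ) - 1)) := by
  obtain ⟨hϖ0, hϖ1⟩ := hϖ
  set p : ℝ := 1 - γ with hp
  set a : ℝ := 1 - 1/ϖ with ha
  set b : ℝ := 1/ϖ with hb
  -- the affine map ε ↦ a ε + b
  let A : ℝ →ᵃ[ℝ] ℝ := AffineMap.lineMap b (a + b)
  have hA : ∀ x : ℝ, A x = a * x + b := by
    intro x
    simp [A, AffineMap.lineMap_apply_ring']
    ring
  have hinner : ∀ x : ℝ, x + (1 - x)/ϖ = a * x + b := by
    intro x; rw [ha, hb]; ring
  have hmap : ∀ x ∈ Set.Ioc (0:ℝ) 1, 0 < a * x + b := by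
    intro x hx
    rw [← hinner]
    have h1 : 0 ≤ (1 - x)/ϖ := div_nonneg (by linarith [hx.2]) hϖ0.le
    linarith [hx.1]
  have hconv : Convex ℝ (Set.Ioc (0:ℝ) 1) := convex_Ioc 0 1
  have hl1 : (0:ℝ) ≤ ℓ - 1 := by linarith
  rcases lt_or_gt_of_ne hγ1 with hγlt | hγgt
  · -- γ < 1, p ∈ (0,1), denominator positive
    have hp0 : 0 < p := by simp [hp]; linarith
    have hp1 : p < 1 := by simp [hp]; linarith
    have hc : 0 < J ^ p - 1 := by
      have : 1 < J ^ p := Real.one_lt_rpow_iff_of_pos (by linarith) |>.mpr (Or.inl ⟨hJ, hp0⟩)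
      linarith
    -- concave numerator
    have h1 : ConcaveOn ℝ (Set.Ioc (0:ℝ) 1) (fun x : ℝ => (ℓ - 1) * x ^ p) := by
      have := (Real.concaveOn_rpow hp0.le hp1.le).smul hl1
      have h := this.subset (fun x hx => le_of_lt hx.1) hconv
      exact h
    have h2 : ConcaveOn ℝ (Set.Ioc (0:ℝ) 1) (fun x : ℝ => (a * x + b) ^ p) := by
      have hcomp := ((Real.concaveOn_rpow hp0.le hp1.le).comp_affineMap A)
      have hsub : Set.Ioc (0:ℝ) 1 ⊆ A ⁻¹' (Set.Ici 0) := by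
        intro x hx
        simp only [Set.mem_preimage, Set.mem_Ici, hA]
        exact (hmap x hx).le
      have h := hcomp.subset hsub hconv
      refine h.congr fun x hx => ?_
      simp [Function.comp, hA]
    have hnum : ConcaveOn ℝ (Set.Ioc (0:ℝ) 1)
        (fun x : ℝ => (ℓ - 1) * x ^ p + (a * x + b) ^ p - ℓ) := by
      have := (h1.add h2).add (concaveOn_const (-ℓ) hconv)
      refine this.congr fun x hx => ?_
      simp [Pi.add_apply]; ring
    have hfinal := hnum.smul (le_of_lt (inv_pos.mpr hc))
    refine hfinal.congr fun x hx => ?_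
    simp only [Pi.smul_apply, smul_eq_mul]
    rw [hinner x]
    field_simp
  · -- γ > 1, p < 0, denominator negative
    have hp0 : p < 0 := by simp [hp]; linarith
    have hc : J ^ p - 1 < 0 := by
      have : J ^ p < 1 := by
        have := Real.rpow_lt_one_of_one_lt_of_neg hJ hp0
        exact this
      linarith
    have h1 : ConvexOn ℝ (Set.Ioc (0:ℝ) 1) (fun x : ℝ => (ℓ - 1) * x ^ p) := by
      have := (convexOn_rpow_neg hp0).smul hl1
      have h := this.subset (fun x hx => hx.1) hconv
      exact h
    have h2 : ConvexOn ℝ (Set.Ioc (0:ℝ) 1) (fun x : ℝ => (a * x + b) ^ p) := by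
      have hcomp := ((convexOn_rpow_neg hp0).comp_affineMap A)
      have hsub : Set.Ioc (0:ℝ) 1 ⊆ A ⁻¹' (Set.Ioi 0) := by
        intro x hx
        simp only [Set.mem_preimage, Set.mem_Ioi, hA]
        exact hmap x hx
      have h := hcomp.subset hsub hconv
      refine h.congr fun x hx => ?_
      simp [Function.comp, hA]
    have hnum : ConvexOn ℝ (Set.Ioc (0:ℝ) 1)
        (fun x : ℝ => (ℓ - 1) * x ^ p + (a * x + b) ^ p - ℓ) := by
      have := (h1.add h2).add (convexOn_const (-ℓ) hconv)
      refine this.congr fun x hx => ?_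
      simp [Pi.add_apply]; ring
    have hneg : ConcaveOn ℝ (Set.Ioc (0:ℝ) 1)
        (fun x : ℝ => -((ℓ - 1) * x ^ p + (a * x + b) ^ p - ℓ)) := hnum.neg
    have hfinal := hneg.smul (le_of_lt (neg_pos.mpr (inv_neg''.mpr hc)))
    refine hfinal.congr fun x hx => ?_
    simp only [Pi.smul_apply, smul_eq_mul]
    rw [hinner x]
    field_simp
end

section
/- Fix real numbers γ > 0 with γ ≠ 1, J > 1, ℓ > 1 and ϖ ∈ (0,1) with ϖ ≤ 1/ℓ. Define ε_o = ( (((ℓ−1)/(ϖ^{−1}−1))^{−1/γ} − 1)·ϖ + 1 )^{−1} and f₁ : (0,1] → ℝ by f₁(ε) = [ (ℓ−1) ε^{1−γ} + (ε + (1−ε)/ϖ)^{1−γ} − ℓ ] / (J^{1−γ} − 1). Then ε_o ∈ (0,1] and the derivative of f₁ vanishes at ε_o, i.e., f₁′(ε_o) = 0. -/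
open Real Set

/-- The stationary point (C.3) in the proof of Theorem 3 of the paper:
for `γ > 0`, `γ ≠ 1`, `J > 1`, `ℓ > 1` and `ϖ ∈ (0,1)` with `ϖ ≤ 1/ℓ`, the
point `ε_o = ((((ℓ-1)/(ϖ⁻¹-1))^{-1/γ} - 1) ϖ + 1)⁻¹` lies in `(0,1]` and the
derivative of the two-stair objective `f₁` vanishes at `ε_o`. -/
theorem two_stair_stationary_point (γ J ℓ ϖ : ℝ) (hγ : 0 < γ) (hγ1 : γ ≠ 1)
    (hJ : 1 < J) (hℓ : 1 < ℓ) (hϖ : ϖ ∈ Set.Ioo (0 : ℝ) 1) (hϖℓ : ϖ ≤ 1 / ℓ) :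
    ((((ℓ - 1) / (ϖ⁻¹ - 1)) ^ (-(1 / γ)) - 1) * ϖ + 1)⁻¹ ∈ Set.Ioc (0 : ℝ) 1 ∧
      deriv
        (fun ε : ℝ =>
          ((ℓ - 1) * ε ^ (1 - γ) + (ε + (1 - ε) / ϖ) ^ (1 - γ) - ℓ) /
            (J ^ (1 - γ) - 1))
        ((((ℓ - 1) / (ϖ⁻¹ - 1)) ^ (-(1 / γ)) - 1) * ϖ + 1)⁻¹ = 0 := by
  obtain ⟨hϖ0, hϖ1⟩ := hϖ
  have hϖne : ϖ ≠ 0 := ne_of_gt hϖ0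
  have hinv : 1 < ϖ⁻¹ := (one_lt_inv₀ hϖ0).mpr hϖ1
  have hden : 0 < ϖ⁻¹ - 1 := by linarith
  set A : ℝ := (ℓ - 1) / (ϖ⁻¹ - 1) with hA
  have hA0 : 0 < A := div_pos (by linarith) hden
  have hℓϖ : ℓ ≤ ϖ⁻¹ := by
    rw [one_div] at hϖℓ
    exact (le_inv_comm₀ (by linarith) hϖ0).mpr hϖℓ
  have hA1 : A ≤ 1 := by
    rw [hA, div_le_one hden]; linarith
  set t : ℝ := A ^ (-(1 / γ)) with ht
  have ht0 : 0 < t := Real.rpow_pos_of_pos hA0 _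
  have ht1 : 1 ≤ t := Real.one_le_rpow_of_pos_of_le_one_of_nonpos hA0 hA1
    (by rw [neg_nonpos]; positivity)
  set d : ℝ := (t - 1) * ϖ + 1 with hd
  have hd1 : 1 ≤ d := by nlinarith
  have hd0 : 0 < d := by linarith
  set ε : ℝ := d⁻¹ with hε
  have hε0 : 0 < ε := inv_pos.mpr hd0
  have hε1 : ε ≤ 1 := inv_le_one_of_one_le₀ hd1
  refine ⟨⟨hε0, hε1⟩, ?_⟩
  -- g = t * ε
  have hg : ε + (1 - ε) / ϖ = t * ε := by
    rw [hε, hd]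
    have hne : (t - 1) * ϖ + 1 ≠ 0 := ne_of_gt (by nlinarith)
    field_simp
    ring
  have hg0 : 0 < ε + (1 - ε) / ϖ := by rw [hg]; positivity
  -- derivative computation
  have h1 : HasDerivAt (fun x : ℝ => x ^ (1 - γ)) ((1 - γ) * ε ^ (1 - γ - 1)) ε :=
    Real.hasDerivAt_rpow_const (Or.inl (ne_of_gt hε0))
  have h2 : HasDerivAt (fun x : ℝ => x + (1 - x) / ϖ) (1 + (0 - 1) / ϖ) ε :=
    (hasDerivAt_id ε).add (((hasDerivAt_const ε (1:ℝ)).sub (hasDerivAt_id ε)).div_const ϖ)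
  have h3 : HasDerivAt (fun x : ℝ => (x + (1 - x) / ϖ) ^ (1 - γ))
      ((1 + (0 - 1) / ϖ) * (1 - γ) * (ε + (1 - ε) / ϖ) ^ (1 - γ - 1)) ε :=
    h2.rpow_const (Or.inl (ne_of_gt hg0))
  have h4 : HasDerivAt
      (fun x : ℝ => ((ℓ - 1) * x ^ (1 - γ) + (x + (1 - x) / ϖ) ^ (1 - γ) - ℓ) /
        (J ^ (1 - γ) - 1))
      (((ℓ - 1) * ((1 - γ) * ε ^ (1 - γ - 1)) +
        (1 + (0 - 1) / ϖ) * (1 - γ) * (ε + (1 - ε) / ϖ) ^ (1 - γ - 1)) / (J ^ (1 - γ) - 1)) ε :=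
    (((h1.const_mul (ℓ - 1)).add h3).sub_const ℓ).div_const _
  rw [h4.deriv]
  -- show the numerator vanishes
  have key : (ℓ - 1) * ε ^ (1 - γ - 1) = (ϖ⁻¹ - 1) * (ε + (1 - ε) / ϖ) ^ (1 - γ - 1) := by
    have e1 : (1 : ℝ) - γ - 1 = -γ := by ring
    rw [hg, e1, Real.mul_rpow ht0.le hε0.le]
    have e2 : t ^ (-γ) = A := by
      rw [ht, ← Real.rpow_mul hA0.le]
      have : -(1 / γ) * -γ = 1 := by field_simp
      rw [this, Real.rpow_one]
    rw [e2, ← mul_assoc, show (ϖ⁻¹ - 1) * A = ℓ - 1 by rw [hA, mul_div_assoc', mul_comm, mul_div_assoc, div_self (ne_of_gt hden), mul_one]]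
  have hnum : (ℓ - 1) * ((1 - γ) * ε ^ (1 - γ - 1)) +
      (1 + (0 - 1) / ϖ) * (1 - γ) * (ε + (1 - ε) / ϖ) ^ (1 - γ - 1) = 0 := by
    have : (1 : ℝ) + (0 - 1) / ϖ = -(ϖ⁻¹ - 1) := by field_simp; ring
    rw [this]
    nlinarith [key]
  rw [hnum, zero_div]
end

section
/- Fix real numbers γ > 0 with γ ≠ 1, J > 1, ℓ > 1 and ϖ ∈ (0,1). Define ε_o = ( (((ℓ−1)/(ϖ^{−1}−1))^{−1/γ} − 1)·ϖ + 1 )^{−1} and f₁ : (0,1] → ℝ by f₁(ε) = [ (ℓ−1) ε^{1−γ} + (ε + (1−ε)/ϖ)^{1−γ} − ℓ ] / (J^{1−γ} − 1). Then ε* = min(ε_o, 1) satisfies ε* ∈ (0,1] and f₁(ε) ≤ f₁(ε*) for every ε ∈ (0,1]; that is, min(max(ε_o,0),1) is a maximizer of f₁ over (0,1]. (Theorem 3 of the paper.) -/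
open Real Set

/-- Theorem 3 of the paper: for `γ > 0`, `γ ≠ 1`, `J > 1`, `ℓ > 1` and
`ϖ ∈ (0,1)`, the point `ε* = min(ε_o, 1)`, where
`ε_o = ((((ℓ-1)/(ϖ⁻¹-1))^{-1/γ} - 1) ϖ + 1)⁻¹`, lies in `(0,1]` and maximizes
the two-stair objective `f₁` over `(0,1]`. -/
theorem two_stair_optimal_epsilon (γ J ℓ ϖ : ℝ) (hγ : 0 < γ) (hγ1 : γ ≠ 1)
    (hJ : 1 < J) (hℓ : 1 < ℓ) (hϖ : ϖ ∈ Set.Ioo (0 : ℝ) 1) :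
    min ((((ℓ - 1) / (ϖ⁻¹ - 1)) ^ (-(1 / γ)) - 1) * ϖ + 1)⁻¹ 1 ∈ Set.Ioc (0 : ℝ) 1 ∧
      ∀ ε ∈ Set.Ioc (0 : ℝ) 1,
        ((ℓ - 1) * ε ^ (1 - γ) + (ε + (1 - ε) / ϖ) ^ (1 - γ) - ℓ) /
            (J ^ (1 - γ) - 1) ≤
          ((ℓ - 1) * (min ((((ℓ - 1) / (ϖ⁻¹ - 1)) ^ (-(1 / γ)) - 1) * ϖ + 1)⁻¹ 1) ^ (1 - γ) +
              ((min ((((ℓ - 1) / (ϖ⁻¹ - 1)) ^ (-(1 / γ)) - 1) * ϖ + 1)⁻¹ 1) +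
                  (1 - min ((((ℓ - 1) / (ϖ⁻¹ - 1)) ^ (-(1 / γ)) - 1) * ϖ + 1)⁻¹ 1) / ϖ) ^
                (1 - γ) -
              ℓ) /
            (J ^ (1 - γ) - 1) := by
  obtain ⟨hϖ0, hϖ1⟩ := hϖ
  have hϖinv : 1 < ϖ⁻¹ := (one_lt_inv₀ hϖ0).mpr hϖ1
  set c : ℝ := ϖ⁻¹ - 1 with hcdef
  have hc : 0 < c := by rw [hcdef]; linarith
  have hcϖ : c * ϖ = 1 - ϖ := by
    rw [hcdef, sub_mul, inv_mul_cancel₀ hϖ0.ne', one_mul]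
  have hℓ1 : 0 < ℓ - 1 := by linarith
  have hB : 0 < (ℓ - 1) / c := div_pos hℓ1 hc
  rw [Real.rpow_neg hB.le]
  set s : ℝ := ((ℓ - 1) / c) ^ (1 / γ) with hsdef
  have hs : 0 < s := Real.rpow_pos_of_pos hB _
  have hden : 0 < (s⁻¹ - 1) * ϖ + 1 := by
    have hsi : 0 < s⁻¹ := inv_pos.mpr hs
    nlinarith [mul_pos hsi hϖ0]
  set εo : ℝ := ((s⁻¹ - 1) * ϖ + 1)⁻¹ with hεodef
  have hεo : 0 < εo := inv_pos.mpr hden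
  set t : ℝ := min εo 1 with htdef
  have hds : ((s⁻¹ - 1) * ϖ + 1) * s = ϖ + s * (1 - ϖ) := by
    field_simp
    ring
  -- characterizations of εo
  have key1 : ∀ x : ℝ, x ≤ εo ↔ x * (ϖ + s * (1 - ϖ)) ≤ s := by
    intro x
    rw [hεodef, inv_eq_one_div, le_div_iff₀ hden, ← mul_le_mul_iff_of_pos_right hs, mul_assoc, hds, one_mul]
  have key1' : ∀ x : ℝ, εo ≤ x ↔ s ≤ x * (ϖ + s * (1 - ϖ)) := by
    intro x
    rw [hεodef, inv_eq_one_div, div_le_iff₀ hden, ← mul_le_mul_iff_of_pos_right hs, mul_assoc, hds, one_mul]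
  have hexp : ∀ x : ℝ, s * (1 + c * (1 - x)) * ϖ = s * ϖ + s * (1 - ϖ) * (1 - x) := by
    intro x
    linear_combination (s * (1 - x)) * hcϖ
  have key2 : ∀ x : ℝ, x ≤ s * (1 + c * (1 - x)) ↔ x * (ϖ + s * (1 - ϖ)) ≤ s := by
    intro x
    rw [← mul_le_mul_iff_of_pos_right hϖ0, hexp x]
    constructor <;> intro h <;> nlinarith [h]
  have key2' : ∀ x : ℝ, s * (1 + c * (1 - x)) ≤ x ↔ s ≤ x * (ϖ + s * (1 - ϖ)) := by
    intro x
    rw [← mul_le_mul_iff_of_pos_right hϖ0, hexp x]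
    constructor <;> intro h <;> nlinarith [h]
  have hcrit : ∀ x : ℝ, x ≤ s * (1 + c * (1 - x)) ↔ x ≤ εo :=
    fun x => (key2 x).trans (key1 x).symm
  have hcrit' : ∀ x : ℝ, s * (1 + c * (1 - x)) ≤ x ↔ εo ≤ x :=
    fun x => (key2' x).trans (key1' x).symm
  have hsg : s ^ γ = (ℓ - 1) / c := by
    rw [hsdef, ← Real.rpow_mul hB.le, one_div, inv_mul_cancel₀ hγ.ne', Real.rpow_one]
  -- sign of the bracket in the derivative
  have hsign : ∀ x u : ℝ, 0 < x → 0 < u →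
      (0 ≤ (ℓ - 1) * x ^ (-γ) - c * u ^ (-γ) ↔ x ≤ s * u) := by
    intro x u hx hu
    have hxγ : 0 < x ^ γ := Real.rpow_pos_of_pos hx γ
    have huγ : 0 < u ^ γ := Real.rpow_pos_of_pos hu γ
    rw [Real.rpow_neg hx.le, Real.rpow_neg hu.le, sub_nonneg, ← div_eq_mul_inv,
      ← div_eq_mul_inv, div_le_div_iff₀ huγ hxγ,
      ← Real.rpow_le_rpow_iff hx.le (mul_pos hs hu).le hγ,
      Real.mul_rpow hs.le hu.le, hsg, div_mul_eq_mul_div, le_div_iff₀ hc, mul_comm (x ^ γ) c]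
  have hsign' : ∀ x u : ℝ, 0 < x → 0 < u →
      ((ℓ - 1) * x ^ (-γ) - c * u ^ (-γ) ≤ 0 ↔ s * u ≤ x) := by
    intro x u hx hu
    have hxγ : 0 < x ^ γ := Real.rpow_pos_of_pos hx γ
    have huγ : 0 < u ^ γ := Real.rpow_pos_of_pos hu γ
    rw [Real.rpow_neg hx.le, Real.rpow_neg hu.le, sub_nonpos, ← div_eq_mul_inv,
      ← div_eq_mul_inv, div_le_div_iff₀ hxγ huγ,
      ← Real.rpow_le_rpow_iff (mul_pos hs hu).le hx.le hγ,
      Real.mul_rpow hs.le hu.le, hsg, div_mul_eq_mul_div, div_le_iff₀ hc, mul_comm (x ^ γ) c]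
  -- the (sign-adjusted) objective and its derivative
  set G : ℝ → ℝ := fun y => (1 - γ) * ((ℓ - 1) * y ^ (1 - γ) + (1 + c * (1 - y)) ^ (1 - γ))
    with hGdef
  have hG : ∀ x : ℝ, 0 < x → 0 < 1 + c * (1 - x) →
      HasDerivAt G ((1 - γ) ^ 2 * ((ℓ - 1) * x ^ (-γ) - c * (1 + c * (1 - x)) ^ (-γ))) x := by
    intro x hx hu
    have h1 : HasDerivAt (fun y : ℝ => y ^ (1 - γ)) ((1 - γ) * x ^ (1 - γ - 1)) x :=
      Real.hasDerivAt_rpow_const (Or.inl hx.ne')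
    have h2i : HasDerivAt (fun y : ℝ => 1 + c * (1 - y)) (c * (-1)) x :=
      (((hasDerivAt_id x).const_sub 1).const_mul c).const_add 1
    have h2o : HasDerivAt (fun y : ℝ => (1 + c * (1 - y)) ^ (1 - γ))
        (((1 - γ) * (1 + c * (1 - x)) ^ (1 - γ - 1)) * (c * (-1))) x := by
      convert h2i.rpow_const (p := 1 - γ) (Or.inl hu.ne') using 1
      ring
    have hsum := ((h1.const_mul (ℓ - 1)).add h2o).const_mul (1 - γ)
    refine hsum.congr_deriv ?_
    rw [show (1 : ℝ) - γ - 1 = -γ by ring]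
    ring
  have hupos : ∀ x : ℝ, x ≤ 1 → 0 < 1 + c * (1 - x) := by
    intro x hx
    have : 0 ≤ c * (1 - x) := mul_nonneg hc.le (by linarith)
    linarith
  -- monotone increasing up to εo
  have hmain : ∀ a b : ℝ, 0 < a → b ≤ 1 → b ≤ εo → a ≤ b → G a ≤ G b := by
    intro a b ha hb1 hbo hab
    have hmono : MonotoneOn G (Icc a b) := by
      apply monotoneOn_of_deriv_nonneg (convex_Icc a b)
      · intro x hx
        exact ((hG x (lt_of_lt_of_le ha hx.1) (hupos x (hx.2.trans hb1))).continuousAt).continuousWithinAt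
      · intro x hx
        rw [interior_Icc] at hx
        exact ((hG x (lt_of_lt_of_le ha hx.1.le) (hupos x (hx.2.le.trans hb1))).differentiableAt).differentiableWithinAt
      · intro x hx
        rw [interior_Icc] at hx
        have hx0 : 0 < x := lt_of_lt_of_le ha hx.1.le
        have hu0 : 0 < 1 + c * (1 - x) := hupos x (hx.2.le.trans hb1)
        rw [(hG x hx0 hu0).deriv]
        apply mul_nonneg (sq_nonneg _)
        rw [hsign x _ hx0 hu0, hcrit x]
        exact hx.2.le.trans hbo
    exact hmono ⟨le_rfl, hab⟩ ⟨hab, le_rfl⟩ hab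
  -- monotone decreasing beyond εo
  have hmain2 : ∀ a b : ℝ, 0 < a → b ≤ 1 → εo ≤ a → a ≤ b → G b ≤ G a := by
    intro a b ha hb1 hao hab
    have hanti : AntitoneOn G (Icc a b) := by
      apply antitoneOn_of_deriv_nonpos (convex_Icc a b)
      · intro x hx
        exact ((hG x (lt_of_lt_of_le ha hx.1) (hupos x (hx.2.trans hb1))).continuousAt).continuousWithinAt
      · intro x hx
        rw [interior_Icc] at hx
        exact ((hG x (lt_of_lt_of_le ha hx.1.le) (hupos x (hx.2.le.trans hb1))).differentiableAt).differentiableWithinAt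
      · intro x hx
        rw [interior_Icc] at hx
        have hx0 : 0 < x := lt_of_lt_of_le ha hx.1.le
        have hu0 : 0 < 1 + c * (1 - x) := hupos x (hx.2.le.trans hb1)
        rw [(hG x hx0 hu0).deriv]
        apply mul_nonpos_of_nonneg_of_nonpos (sq_nonneg _)
        rw [hsign' x _ hx0 hu0, hcrit' x]
        exact hao.trans hx.1.le
    exact hanti ⟨le_rfl, hab⟩ ⟨hab, le_rfl⟩ hab
  have ht0 : 0 < t := lt_min hεo one_pos
  have ht1 : t ≤ 1 := min_le_right _ _
  refine ⟨⟨ht0, ht1⟩, ?_⟩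
  intro ε hε
  obtain ⟨hε0, hε1⟩ := hε
  have harg : ∀ x : ℝ, x + (1 - x) / ϖ = 1 + c * (1 - x) := by
    intro x
    rw [hcdef]
    field_simp
    ring
  rw [harg ε, harg t]
  -- the central inequality
  have hGG : G ε ≤ G t := by
    rcases le_or_gt ε t with h | h
    · exact hmain ε t hε0 ht1 (min_le_left _ _) h
    · have hεo1 : εo < 1 := by
        by_contra h'
        push_neg at h'
        have : t = 1 := min_eq_right h'
        rw [this] at h
        exact absurd hε1 (not_le.mpr h)
      have hteq : t = εo := min_eq_left hεo1.le
      exact hmain2 t ε ht0 hε1 (le_of_eq hteq.symm) h.le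
  have hGε : G ε = (1 - γ) * ((ℓ - 1) * ε ^ (1 - γ) + (1 + c * (1 - ε)) ^ (1 - γ)) := rfl
  have hGt : G t = (1 - γ) * ((ℓ - 1) * t ^ (1 - γ) + (1 + c * (1 - t)) ^ (1 - γ)) := rfl
  rw [hGε, hGt] at hGG
  rcases hγ1.lt_or_gt with h | h
  · -- γ < 1
    have h1γ : 0 < 1 - γ := by linarith
    have hD : 0 < J ^ (1 - γ) - 1 := by
      have : 1 < J ^ (1 - γ) :=
        (Real.one_lt_rpow_iff_of_pos (by linarith)).mpr (Or.inl ⟨hJ, h1γ⟩)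
      linarith
    have hA : (ℓ - 1) * ε ^ (1 - γ) + (1 + c * (1 - ε)) ^ (1 - γ) ≤
        (ℓ - 1) * t ^ (1 - γ) + (1 + c * (1 - t)) ^ (1 - γ) :=
      le_of_mul_le_mul_left hGG h1γ
    exact (div_le_div_iff_of_pos_right hD).mpr (by linarith)
  · -- γ > 1
    have h1γ : 1 - γ < 0 := by linarith
    have hD : J ^ (1 - γ) - 1 < 0 := by
      have : J ^ (1 - γ) < 1 := Real.rpow_lt_one_of_one_lt_of_neg hJ h1γ
      linarith
    have hA : (ℓ - 1) * t ^ (1 - γ) + (1 + c * (1 - t)) ^ (1 - γ) ≤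
        (ℓ - 1) * ε ^ (1 - γ) + (1 + c * (1 - ε)) ^ (1 - γ) := by
      nlinarith [hGG]
    exact (div_le_div_right_of_neg hD).mpr (by linarith)
end
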